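/- Let m > 2 be an integer and k > 0 a real number with (m−2)² + 8k > 4. If a four-times-differentiable function ρ : (0,∞) → ℝ satisfies the fourth-order system F''(r) + (m−1)F'(r)/r − 2k F(r)/r² = 0 on (0,∞), where F(r) := ρ''(r) + (m−1)ρ'(r)/r − 2k ρ(r)/r², then there exist functions ρ₁, ρ₂ : (0,∞) → ℝ, each satisfying the harmonic-map ODE ρᵢ''(r) + (m−1)ρᵢ'(r)/r − 2k ρᵢ(r)/r² = 0, such that ρ(r) = r²·ρ₁(r) + ρ₂(r) for all r > 0. -/

import Mathlib

open Set Filter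

set_option maxHeartbeats 1600000


/- STATEMENT 3: ODE form of the Almansi property: for m > 2 and (m−2)² + 8k > 4,
every solution of the biharmonic ODE F'' + (m−1)F'/r − 2kF/r² = 0,
F = ρ'' + (m−1)ρ'/r − 2kρ/r², decomposes as ρ = r²ρ₁ + ρ₂ with ρ₁, ρ₂
solutions of the harmonic ODE. -/
theorem stmt_3 (m : ℕ) (hm : 2 < m) (k : ℝ) (hk : 0 < k)
    (hres : 4 < ((m : ℝ) - 2) ^ 2 + 8 * k)
    (ρ : ℝ → ℝ)
    (hρ : ∀ r : ℝ, 0 < r → ContDiffAt ℝ 4 ρ r)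
    (F : ℝ → ℝ)
    (hF : ∀ r : ℝ, 0 < r →
      F r = deriv (deriv ρ) r + ((m : ℝ) - 1) * deriv ρ r / r - 2 * k * ρ r / r ^ 2)
    (hbi : ∀ r : ℝ, 0 < r →
      deriv (deriv F) r + ((m : ℝ) - 1) * deriv F r / r - 2 * k * F r / r ^ 2 = 0) :
    ∃ ρ₁ ρ₂ : ℝ → ℝ,
      (∀ r : ℝ, 0 < r → ContDiffAt ℝ 2 ρ₁ r) ∧
      (∀ r : ℝ, 0 < r → ContDiffAt ℝ 2 ρ₂ r) ∧
      (∀ r : ℝ, 0 < r →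
        deriv (deriv ρ₁) r + ((m : ℝ) - 1) * deriv ρ₁ r / r - 2 * k * ρ₁ r / r ^ 2 = 0) ∧
      (∀ r : ℝ, 0 < r →
        deriv (deriv ρ₂) r + ((m : ℝ) - 1) * deriv ρ₂ r / r - 2 * k * ρ₂ r / r ^ 2 = 0) ∧
      (∀ r : ℝ, 0 < r → ρ r = r ^ 2 * ρ₁ r + ρ₂ r) := by
  -- constants
  set C : ℝ := (m : ℝ) ^ 2 - 4 * (m : ℝ) + 8 * k with hCdef
  have hC : C ≠ 0 := by nlinarith [hres]
  set a : ℝ := ((m : ℝ) - 4) / (2 * C) with hadef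
  set b : ℝ := 1 / C with hbdef
  -- smoothness of ρ and its derivatives on Ioi 0
  have h1 : ContDiffOn ℝ 4 ρ (Ioi 0) := fun x hx => (hρ x hx).contDiffWithinAt
  have h2 : ContDiffOn ℝ 3 (deriv ρ) (Ioi 0) := h1.deriv_of_isOpen isOpen_Ioi (by norm_num)
  have h3 : ContDiffOn ℝ 2 (deriv (deriv ρ)) (Ioi 0) :=
    h2.deriv_of_isOpen isOpen_Ioi (by norm_num)
  -- F is C² on Ioi 0
  have hFC : ContDiffOn ℝ 2 F (Ioi 0) := by
    have hexpr : ContDiffOn ℝ 2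
        (fun s => deriv (deriv ρ) s + ((m : ℝ) - 1) * deriv ρ s / s - 2 * k * ρ s / s ^ 2)
        (Ioi 0) := by
      apply ContDiffOn.sub
      · exact h3.add (((contDiffOn_const.mul (h2.of_le (by norm_num))).div contDiffOn_id
          (fun x hx => ne_of_gt hx)))
      · exact (contDiffOn_const.mul (h1.of_le (by norm_num))).div (contDiffOn_id.pow 2)
          (fun x hx => pow_ne_zero _ (ne_of_gt hx))
    exact hexpr.congr (fun s hs => hF s hs)
  have hF1C : ContDiffOn ℝ 1 (deriv F) (Ioi 0) := hFC.deriv_of_isOpen isOpen_Ioi (by norm_num)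
  -- rearranged biharmonic ODE: value of F''
  have hF2 : ∀ s ∈ Ioi (0:ℝ), deriv (deriv F) s
      = 2 * k * F s / s ^ 2 - ((m : ℝ) - 1) * deriv F s / s := by
    intro s hs
    have := hbi s hs
    linarith
  -- F'' is C¹ on Ioi 0, hence deriv F is C²
  have hF2C : ContDiffOn ℝ 1 (deriv (deriv F)) (Ioi 0) := by
    have hexpr : ContDiffOn ℝ 1
        (fun s => 2 * k * F s / s ^ 2 - ((m : ℝ) - 1) * deriv F s / s) (Ioi 0) := by
      apply ContDiffOn.sub
      · exact (contDiffOn_const.mul (hFC.of_le (by norm_num))).div (contDiffOn_id.pow 2)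
          (fun x hx => pow_ne_zero _ (ne_of_gt hx))
      · exact (contDiffOn_const.mul hF1C).div contDiffOn_id (fun x hx => ne_of_gt hx)
    exact hexpr.congr hF2
  have hF1C2 : ContDiffOn ℝ 2 (deriv F) (Ioi 0) := by
    rw [show (2 : WithTop ℕ∞) = 1 + 1 by norm_num,
      contDiffOn_succ_iff_deriv_of_isOpen isOpen_Ioi]
    exact ⟨hF1C.differentiableOn (by norm_num), by simp, hF2C⟩
  -- the two functions
  set ρ₁ : ℝ → ℝ := fun s => a * F s + b * (s * deriv F s) with hρ₁def
  set ρ₂ : ℝ → ℝ := fun s => ρ s - s ^ 2 * ρ₁ s with hρ₂def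
  have hρ₁C : ContDiffOn ℝ 2 ρ₁ (Ioi 0) :=
    (contDiffOn_const.mul hFC).add (contDiffOn_const.mul (contDiffOn_id.mul hF1C2))
  have hρ₂C : ContDiffOn ℝ 2 ρ₂ (Ioi 0) :=
    (h1.of_le (by norm_num)).sub ((contDiffOn_id.pow 2).mul hρ₁C)
  -- pointwise differentiability helpers
  have hdF : ∀ s ∈ Ioi (0:ℝ), DifferentiableAt ℝ F s := fun s hs =>
    (hFC.contDiffAt (Ioi_mem_nhds hs)).differentiableAt (by norm_num)
  have hdF1 : ∀ s ∈ Ioi (0:ℝ), DifferentiableAt ℝ (deriv F) s := fun s hs =>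
    (hF1C2.contDiffAt (Ioi_mem_nhds hs)).differentiableAt (by norm_num)
  -- derivative of ρ₁
  have hρ₁' : ∀ s ∈ Ioi (0:ℝ), deriv ρ₁ s
      = (a + (2 - (m : ℝ)) * b) * deriv F s + 2 * k * b * F s / s := by
    intro s hs
    have hs0 : s ≠ 0 := ne_of_gt hs
    have hD : HasDerivAt ρ₁
        (a * deriv F s + b * (1 * deriv F s + s * deriv (deriv F) s)) s := by
      exact (((hdF s hs).hasDerivAt).const_mul a).add
        (((hasDerivAt_id s).mul ((hdF1 s hs).hasDerivAt)).const_mul b)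
    rw [hD.deriv, hF2 s hs]
    field_simp
    ring
  -- derivative of the derivative-of-ρ₁ formula
  have hfd : ∀ r ∈ Ioi (0:ℝ), HasDerivAt
      (fun s => (a + (2 - (m : ℝ)) * b) * deriv F s + 2 * k * b * F s / s)
      ((a + (2 - (m : ℝ)) * b) * deriv (deriv F) r
        + ((2 * k * b * deriv F r) * r - 2 * k * b * F r * 1) / r ^ 2) r := by
    intro r hr
    exact (((hdF1 r hr).hasDerivAt).const_mul _).add
      ((((hdF r hr).hasDerivAt).const_mul (2 * k * b)).div (hasDerivAt_id r) (ne_of_gt hr))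
  have hρ₁'' : ∀ r ∈ Ioi (0:ℝ), deriv (deriv ρ₁) r
      = (a + (2 - (m : ℝ)) * b) * deriv (deriv F) r
        + ((2 * k * b * deriv F r) * r - 2 * k * b * F r * 1) / r ^ 2 := by
    intro r hr
    have hev : deriv ρ₁ =ᶠ[nhds r]
        (fun s => (a + (2 - (m : ℝ)) * b) * deriv F s + 2 * k * b * F s / s) := by
      filter_upwards [Ioi_mem_nhds hr] with s hs using hρ₁' s hs
    rw [hev.deriv_eq, (hfd r hr).deriv]
  -- harmonic ODE for ρ₁
  have hL1 : ∀ r : ℝ, 0 < r →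
      deriv (deriv ρ₁) r + ((m : ℝ) - 1) * deriv ρ₁ r / r - 2 * k * ρ₁ r / r ^ 2 = 0 := by
    intro r hr
    have hr' : r ∈ Ioi (0:ℝ) := hr
    rw [hρ₁'' r hr', hρ₁' r hr', hF2 r hr', hρ₁def]
    have hr0 : r ≠ 0 := ne_of_gt hr
    field_simp
    ring
  -- the key first-order relation: 4 r ρ₁' + 2 m ρ₁ = F
  have hsum : ∀ s ∈ Ioi (0:ℝ), 4 * s * deriv ρ₁ s + 2 * (m : ℝ) * ρ₁ s = F s := by
    intro s hs
    have hs0 : s ≠ 0 := ne_of_gt hs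
    rw [hρ₁' s hs]
    show 4 * s * _ + 2 * (m : ℝ) * (a * F s + b * (s * deriv F s)) = F s
    rw [hadef, hbdef, hCdef]
    have hC' : (m : ℝ) ^ 2 - 4 * (m : ℝ) + 8 * k ≠ 0 := hC
    field_simp
    have hinv : (-((m : ℝ) * 4) + (m : ℝ) ^ 2 + k * 8) * (-((m : ℝ) * 4) + (m : ℝ) ^ 2 + k * 8)⁻¹ = 1 :=
      mul_inv_cancel₀ (by intro h; apply hC'; linarith)
    linear_combination (2 * F s) * hinv
  -- differentiability of ρ₁ and its derivative
  have hdρ1 : ∀ s ∈ Ioi (0:ℝ), DifferentiableAt ℝ ρ₁ s := fun s hs =>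
    (hρ₁C.contDiffAt (Ioi_mem_nhds hs)).differentiableAt (by norm_num)
  have hρ₁'C : ContDiffOn ℝ 1 (deriv ρ₁) (Ioi 0) :=
    hρ₁C.deriv_of_isOpen isOpen_Ioi (by norm_num)
  have hdρ1' : ∀ s ∈ Ioi (0:ℝ), DifferentiableAt ℝ (deriv ρ₁) s := fun s hs =>
    (hρ₁'C.contDiffAt (Ioi_mem_nhds hs)).differentiableAt (by norm_num)
  have hdρ' : ∀ s ∈ Ioi (0:ℝ), DifferentiableAt ℝ (deriv ρ) s := fun s hs =>
    ((h2.contDiffAt (Ioi_mem_nhds hs)).differentiableAt (by norm_num))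
  -- derivative of ρ₂
  have hρ₂' : ∀ s ∈ Ioi (0:ℝ), deriv ρ₂ s
      = deriv ρ s - (2 * s * ρ₁ s + s ^ 2 * deriv ρ₁ s) := by
    intro s hs
    have hD : HasDerivAt ρ₂
        (deriv ρ s - ((↑2 * s ^ 1) * ρ₁ s + s ^ 2 * deriv ρ₁ s)) s := by
      have hρd : DifferentiableAt ℝ ρ s := (hρ s hs).differentiableAt (by norm_num)
      exact (hρd.hasDerivAt.sub ((hasDerivAt_pow 2 s).mul ((hdρ1 s hs).hasDerivAt)))
    rw [hD.deriv]
    push_cast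
    ring
  -- harmonic ODE for ρ₂
  have hL2 : ∀ r : ℝ, 0 < r →
      deriv (deriv ρ₂) r + ((m : ℝ) - 1) * deriv ρ₂ r / r - 2 * k * ρ₂ r / r ^ 2 = 0 := by
    intro r hr
    have hr' : r ∈ Ioi (0:ℝ) := hr
    have hr0 : r ≠ 0 := ne_of_gt hr
    have hev : deriv ρ₂ =ᶠ[nhds r]
        (fun s => deriv ρ s - (2 * s * ρ₁ s + s ^ 2 * deriv ρ₁ s)) := by
      filter_upwards [Ioi_mem_nhds hr] with s hs using hρ₂' s hs
    have hD : HasDerivAt (fun s => deriv ρ s - (2 * s * ρ₁ s + s ^ 2 * deriv ρ₁ s))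
        (deriv (deriv ρ) r - ((2 * 1 * ρ₁ r + 2 * r * deriv ρ₁ r)
          + ((↑2 * r ^ 1) * deriv ρ₁ r + r ^ 2 * deriv (deriv ρ₁) r))) r := by
      refine ((hdρ' r hr').hasDerivAt).sub (HasDerivAt.add ?_ ?_)
      · exact (((hasDerivAt_id r).const_mul (2:ℝ)).mul ((hdρ1 r hr').hasDerivAt))
      · exact (hasDerivAt_pow 2 r).mul ((hdρ1' r hr').hasDerivAt)
    have h2d : deriv (deriv ρ₂) r = deriv (deriv ρ) r - (2 * ρ₁ r + 4 * r * deriv ρ₁ r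
        + r ^ 2 * deriv (deriv ρ₁) r) := by
      rw [hev.deriv_eq, hD.deriv]
      push_cast
      ring
    have hQ2 : deriv (deriv ρ₁) r
        = 2 * k * ρ₁ r / r ^ 2 - ((m : ℝ) - 1) * deriv ρ₁ r / r := by
      have := hL1 r hr
      linarith
    have hρ'' : deriv (deriv ρ) r
        = F r - ((m : ℝ) - 1) * deriv ρ r / r + 2 * k * ρ r / r ^ 2 := by
      rw [hF r hr]; ring
    have hFr' : F r = 4 * r * deriv ρ₁ r + 2 * (m : ℝ) * ρ₁ r := (hsum r hr').symm
    have hρ₂r : ρ₂ r = ρ r - r ^ 2 * ρ₁ r := rfl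
    rw [h2d, hρ₂' r hr', hQ2, hρ'', hFr', hρ₂r]
    field_simp
    ring
  refine ⟨ρ₁, ρ₂, ?_, ?_, hL1, hL2, ?_⟩
  · exact fun r hr => hρ₁C.contDiffAt (Ioi_mem_nhds hr)
  · exact fun r hr => hρ₂C.contDiffAt (Ioi_mem_nhds hr)
  · intro r hr
    show ρ r = r ^ 2 * ρ₁ r + (ρ r - r ^ 2 * ρ₁ r)
    ring
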